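/- Let T be a totally ordered set, k a field, and let I be an ideal of T and a < b elements of T. Then the space of natural transformations (morphisms of functors T → Vect_k) from the interval representation k_{[a,b)} to the interval representation k_I is nonzero if and only if a ∈ I and I ⊆ {x : x < b}; in that case it is one-dimensional. -/

import Mathlib

open scoped Classical DirectSum

universe u v

/-- A persistence module (representation) of a preordered set `T`
over a field `k`: a functor from `T` to `k`-vector spaces. -/
structure PersMod (T : Type u) [Preorder T] (k : Type v) [Field k] where
  V : T → Type v
  [addCommGroup : ∀ t, AddCommGroup (V t)]
  [module : ∀ t, Module k (V t)]
  map : ∀ {s t : T}, s ≤ t → (V s →ₗ[k] V t)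
  map_id : ∀ t : T, map (le_refl t) = LinearMap.id
  map_comp : ∀ {s t u : T} (h₁ : s ≤ t) (h₂ : t ≤ u),
    map (h₁.trans h₂) = (map h₂).comp (map h₁)

attribute [instance] PersMod.addCommGroup PersMod.module

/-- A subset of a preordered set is convex (an interval, in a total order). -/
def IsConvex {T : Type u} [Preorder T] (J : Set T) : Prop :=
  ∀ ⦃a b c : T⦄, a ≤ b → b ≤ c → a ∈ J → c ∈ J → b ∈ J

/-- The interval representation `k_J`: `k` at points of `J`, `0` elsewhere,
identity structure maps within `J`. -/
noncomputable def intervalRep (T : Type u) [Preorder T] (k : Type v) [Field k]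
    (J : Set T) (hJ : IsConvex J) : PersMod T k where
  V t := ↥(if t ∈ J then (⊤ : Submodule k k) else ⊥)
  map {s t} h :=
    { toFun := fun x => ⟨if t ∈ J then (x : k) else 0, by
        by_cases ht : t ∈ J <;> first | (simp only [if_pos ht]; exact Submodule.mem_top) | (simp only [if_neg ht]; exact Submodule.zero_mem _)⟩
      map_add' := fun x y => by
        by_cases ht : t ∈ J <;> ext <;> simp [ht]
      map_smul' := fun c x => by
        by_cases ht : t ∈ J <;> ext <;> simp [ht] }
  map_id t := by
    ext x
    by_cases ht : t ∈ J
    · simp [ht]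
    · have hx : (x : k) = 0 := by
        have h2 := x.2; simp only [if_neg ht] at h2; exact (Submodule.mem_bot k).mp h2
      have e : (if t ∈ J then (x : k) else 0) = (x : k) := by simp only [if_neg ht, hx]
      first | exact e | exact Subtype.ext e
  map_comp {s t u} h₁ h₂ := by
    ext x
    by_cases hu : u ∈ J
    · by_cases ht : t ∈ J
      · have e : (if u ∈ J then (x : k) else 0) =
            (if u ∈ J then (if t ∈ J then (x : k) else 0) else 0) := by simp only [if_pos hu, if_pos ht]
        first | exact e | exact Subtype.ext e
      · by_cases hs : s ∈ J
        · exact absurd (hJ h₁ h₂ hs hu) ht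
        · have hx : (x : k) = 0 := by
            have h2 := x.2; simp only [if_neg hs] at h2; exact (Submodule.mem_bot k).mp h2
          simp [hu, ht, hx]
    · simp [hu]

/-- The space of morphisms of representations `M → N`, as a submodule of
the module of all families of linear maps. -/
def homSubmodule {T : Type u} [Preorder T] (k : Type v) [Field k]
    (M N : PersMod T k) : Submodule k (∀ t, M.V t →ₗ[k] N.V t) where
  carrier := {f | ∀ (s t : T) (h : s ≤ t) (x : M.V s),
    N.map h (f s x) = f t (M.map h x)}
  add_mem' := by
    intro a b ha hb s t h x
    simp [ha s t h x, hb s t h x]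
  zero_mem' := by intro s t h x; simp
  smul_mem' := by
    intro c a ha s t h x
    simp [ha s t h x]

/-- An isomorphism of persistence modules. -/
structure PersIso {T : Type u} [Preorder T] {k : Type v} [Field k]
    (M N : PersMod T k) where
  e : ∀ t, M.V t ≃ₗ[k] N.V t
  natural : ∀ {s t : T} (h : s ≤ t) (x : M.V s),
    e t (M.map h x) = N.map h (e s x)

/-- The pointwise product of a family of persistence modules. -/
def prodRep {T : Type u} [Preorder T] (k : Type v) [Field k]
    (ι : Type v) (F : ι → PersMod T k) : PersMod T k where
  V t := ∀ i, (F i).V t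
  map {s t} h := LinearMap.pi fun i => ((F i).map h).comp (LinearMap.proj i)
  map_id t := by
    ext x i
    simp [(F i).map_id]
  map_comp h₁ h₂ := by
    ext x i
    simp [(F i).map_comp h₁ h₂]

/-- The direct sum of a family of persistence modules. -/
noncomputable def dSum {T : Type u} [Preorder T] (k : Type v) [Field k]
    (ι : Type v) (F : ι → PersMod T k) : PersMod T k where
  V t := ⨁ i, (F i).V t
  map {s t} h :=
    letI := Classical.decEq ι
    DirectSum.toModule k ι _ fun i =>
      (DirectSum.lof k ι (fun j => (F j).V t) i).comp ((F i).map h)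
  map_id t := by
    letI := Classical.decEq ι
    refine DirectSum.linearMap_ext _ fun i => ?_
    ext x
    simp [DirectSum.toModule_lof, (F i).map_id]
  map_comp {s t u} h₁ h₂ := by
    letI := Classical.decEq ι
    refine DirectSum.linearMap_ext _ fun i => ?_
    ext x
    simp [DirectSum.toModule_lof, (F i).map_comp h₁ h₂]

/-- An ideal of a linearly ordered set: a nonempty downward-closed subset. -/
def IsIdeal {T : Type u} [LinearOrder T] (I : Set T) : Prop :=
  I.Nonempty ∧ ∀ ⦃x y : T⦄, x ≤ y → y ∈ I → x ∈ I

theorem isConvex_Ico {T : Type u} [LinearOrder T] (a b : T) : IsConvex (Set.Ico a b) :=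
  fun _ _ _ h1 h2 ha hc => ⟨le_trans ha.1 h1, lt_of_le_of_lt h2 hc.2⟩

theorem IsIdeal.isConvex {T : Type u} [LinearOrder T] {I : Set T} (hI : IsIdeal I) :
    IsConvex I :=
  fun _ _ _ _ hbc _ hc => hI.2 hbc hc


section Helpers

variable {T : Type u} [LinearOrder T] {k : Type v} [Field k]

lemma iRep_val_zero {J : Set T} {hJ : IsConvex J} {t : T} (ht : t ∉ J)
    (x : (intervalRep T k J hJ).V t) : x.1 = 0 := by
  have h2 := x.2
  simp only [intervalRep, if_neg ht] at h2
  exact (Submodule.mem_bot k).mp h2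

lemma iRep_zero_val {J : Set T} {hJ : IsConvex J} {t : T} :
    (0 : (intervalRep T k J hJ).V t).1 = 0 := rfl

lemma iRep_ext {J : Set T} {hJ : IsConvex J} {t : T}
    {x y : (intervalRep T k J hJ).V t} (h : x.1 = y.1) : x = y := Subtype.ext h

lemma iRep_eq_zero {J : Set T} {hJ : IsConvex J} {t : T} (ht : t ∉ J)
    (x : (intervalRep T k J hJ).V t) : x = 0 :=
  iRep_ext (by rw [iRep_val_zero ht x, iRep_zero_val])

lemma iRep_map_val {J : Set T} {hJ : IsConvex J} {s t : T} (h : s ≤ t)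
    (x : (intervalRep T k J hJ).V s) :
    ((intervalRep T k J hJ).map h x).1 = if t ∈ J then x.1 else 0 := rfl

/-- An element of the interval representation at a point of the interval. -/
noncomputable def iRepElt {J : Set T} (hJ : IsConvex J) {t : T} (ht : t ∈ J) (c : k) :
    (intervalRep T k J hJ).V t := ⟨c, by simp only [intervalRep, if_pos ht]; exact Submodule.mem_top⟩

lemma iRepElt_val {J : Set T} (hJ : IsConvex J) {t : T} (ht : t ∈ J) (c : k) :
    (iRepElt hJ ht c).1 = c := rfl

/-- Inclusion of `k` into the stalk of an interval representation. -/
noncomputable def intoRep (I : Set T) (t : T) :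
    k →ₗ[k] ↥(if t ∈ I then (⊤ : Submodule k k) else ⊥) where
  toFun x := ⟨if t ∈ I then x else 0, by
    by_cases ht : t ∈ I
    · simp only [if_pos ht]; exact Submodule.mem_top
    · simp only [if_neg ht]; exact Submodule.zero_mem _⟩
  map_add' x y := by by_cases ht : t ∈ I <;> ext <;> simp [ht]
  map_smul' c x := by by_cases ht : t ∈ I <;> ext <;> simp [ht]

/-- The candidate nonzero morphism: identity on the overlap, zero elsewhere. -/
noncomputable def f0 (I : Set T) (hI : IsConvex I) (J : Set T) (hJ : IsConvex J) (t : T) :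
    (intervalRep T k J hJ).V t →ₗ[k] (intervalRep T k I hI).V t :=
  (intoRep I t).comp
    (Submodule.subtype (if t ∈ J then (⊤ : Submodule k k) else ⊥))

lemma f0_val {I : Set T} {hI : IsConvex I} {J : Set T} {hJ : IsConvex J} {t : T}
    (x : (intervalRep T k J hJ).V t) :
    (f0 I hI J hJ t x).1 = if t ∈ I then x.1 else 0 := rfl

/-- Evaluation of a morphism at a point of `J`, on the element `1`. -/
noncomputable def evMap (I J : Set T) (hI : IsConvex I) (hJ : IsConvex J) {a : T}
    (ha : a ∈ J) :
    ↥(homSubmodule k (intervalRep T k J hJ) (intervalRep T k I hI)) →ₗ[k] k where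
  toFun f := (f.1 a (iRepElt hJ ha 1)).1
  map_add' f g := rfl
  map_smul' c f := rfl

end Helpers

/-- Hom from the interval representation of `[a,b)` to the interval representation
of an ideal `I` is nonzero iff `a ∈ I ⊆ {x | x < b}`, in which case it is
one-dimensional. -/
theorem hom_intervalRep_ideal {T : Type u} [LinearOrder T] (k : Type v) [Field k]
    (I : Set T) (hI : IsIdeal I) (a b : T) (hab : a < b) :
    (homSubmodule k (intervalRep T k (Set.Ico a b) (isConvex_Ico a b))
        (intervalRep T k I hI.isConvex) ≠ ⊥ ↔
      (a ∈ I ∧ ∀ x ∈ I, x < b)) ∧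
    ((a ∈ I ∧ ∀ x ∈ I, x < b) →
      Module.finrank k
        ↥(homSubmodule k (intervalRep T k (Set.Ico a b) (isConvex_Ico a b))
            (intervalRep T k I hI.isConvex)) = 1) := by
  have haJ : a ∈ Set.Ico a b := ⟨le_refl a, hab⟩
  have hJc := isConvex_Ico a b
  have hIc := hI.isConvex
  -- the candidate morphism
  set F : ∀ t, (intervalRep T k (Set.Ico a b) hJc).V t →ₗ[k] (intervalRep T k I hIc).V t :=
    fun t => f0 I hIc (Set.Ico a b) hJc t with hFdef
  have hFmem : (a ∈ I ∧ ∀ x ∈ I, x < b) →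
      F ∈ homSubmodule k (intervalRep T k (Set.Ico a b) hJc) (intervalRep T k I hIc) := by
    rintro ⟨haI, hb⟩ s t h x
    refine iRep_ext ?_
    simp only [hFdef]
    rw [iRep_map_val, f0_val, f0_val, iRep_map_val]
    by_cases htI : t ∈ I
    · have hsI : s ∈ I := hI.2 h htI
      rw [if_pos htI, if_pos htI, if_pos hsI]
      by_cases htJ : t ∈ Set.Ico a b
      · rw [if_pos htJ]
      · have hsJ : s ∉ Set.Ico a b := by
          intro hs
          exact htJ ⟨le_trans hs.1 h, lt_of_not_ge fun hbt => absurd (hb t htI) (not_lt.mpr hbt)⟩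
        rw [if_neg htJ, iRep_val_zero hsJ]
    · rw [if_neg htI, if_neg htI]
  have hFne : a ∈ I → F ≠ 0 := by
    intro haI h0
    have h1 : (F a (iRepElt hJc haJ 1)).1 = (0 : (intervalRep T k I hIc).V a).1 := by
      rw [h0]; rfl
    rw [iRep_zero_val, hFdef] at h1
    simp only at h1
    rw [f0_val, if_pos haI, iRepElt_val] at h1
    exact one_ne_zero h1
  constructor
  · constructor
    · intro hne
      obtain ⟨f, hf, hf0⟩ := Submodule.exists_mem_ne_zero_of_ne_bot hne
      have hex : ∃ t x, f t x ≠ 0 := by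
        by_contra hc
        push_neg at hc
        exact hf0 (funext fun t => LinearMap.ext fun x => hc t x)
      obtain ⟨t, x, htx⟩ := hex
      have htI : t ∈ I := by
        by_contra htI
        exact htx (iRep_eq_zero htI _)
      have htJ : t ∈ Set.Ico a b := by
        by_contra htJ
        rw [iRep_eq_zero htJ x, map_zero] at htx
        exact htx rfl
      refine ⟨hI.2 htJ.1 htI, ?_⟩
      intro y hy
      by_contra hyb
      push_neg at hyb
      have hty : t ≤ y := le_of_lt (lt_of_lt_of_le htJ.2 hyb)
      have hnat := hf t y hty x
      have hyJ : y ∉ Set.Ico a b := fun hy2 => absurd hy2.2 (not_lt.mpr hyb)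
      rw [iRep_eq_zero hyJ
        ((intervalRep T k (Set.Ico a b) (isConvex_Ico a b)).map hty x), map_zero] at hnat
      have hval := congrArg Subtype.val hnat
      rw [iRep_map_val, if_pos hy, iRep_zero_val] at hval
      exact htx (iRep_ext (by rw [hval, iRep_zero_val]))
    · rintro ⟨haI, hb⟩
      rw [Submodule.ne_bot_iff]
      exact ⟨F, hFmem ⟨haI, hb⟩, hFne haI⟩
  · rintro ⟨haI, hb⟩
    have hmem := hFmem ⟨haI, hb⟩
    have hinj : Function.Injective
        (evMap (k := k) I (Set.Ico a b) hI.isConvex (isConvex_Ico a b) haJ) := by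
      rw [injective_iff_map_eq_zero]
      intro f hf0
      have hfa : f.1 a (iRepElt (isConvex_Ico a b) haJ 1) = 0 :=
        iRep_ext (by rw [iRep_zero_val]; exact hf0)
      refine Subtype.ext (funext fun t => LinearMap.ext fun x => ?_)
      show f.1 t x = 0
      by_cases htI : t ∈ I
      · by_cases htJ : t ∈ Set.Ico a b
        · have hnat := f.2 a t htJ.1 (iRepElt (isConvex_Ico a b) haJ x.1)
          have hx' : (intervalRep T k (Set.Ico a b) (isConvex_Ico a b)).map htJ.1
              (iRepElt (isConvex_Ico a b) haJ x.1) = x :=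
            iRep_ext (by rw [iRep_map_val, if_pos htJ, iRepElt_val])
          have hsc : iRepElt (isConvex_Ico a b) haJ x.1
              = x.1 • iRepElt (isConvex_Ico a b) haJ 1 := by
            refine iRep_ext ?_
            rw [iRepElt_val]
            show x.1 = x.1 • (iRepElt (isConvex_Ico a b) haJ (1 : k)).1
            rw [iRepElt_val, smul_eq_mul, mul_one]
          rw [← hx', ← hnat, hsc, map_smul, hfa, smul_zero, map_zero]
        · rw [iRep_eq_zero htJ x, map_zero]
      · exact iRep_eq_zero htI _
    have hsurj : Function.Surjective
        (evMap (k := k) I (Set.Ico a b) hI.isConvex (isConvex_Ico a b) haJ) := by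
      intro c
      refine ⟨c • ⟨F, hmem⟩, ?_⟩
      rw [map_smul]
      have h1 : evMap (k := k) I (Set.Ico a b) hI.isConvex (isConvex_Ico a b) haJ ⟨F, hmem⟩ = 1 := by
        show (F a (iRepElt (isConvex_Ico a b) haJ 1)).1 = 1
        simp only [hFdef]
        rw [f0_val, if_pos haI, iRepElt_val]
      rw [h1, smul_eq_mul, mul_one]
    have e := LinearEquiv.ofBijective
      (evMap (k := k) I (Set.Ico a b) hI.isConvex (isConvex_Ico a b) haJ) ⟨hinj, hsurj⟩
    rw [e.finrank_eq]
    exact Module.finrank_self k
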